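/- For all real numbers β and x₀, there exists c ∈ ℤ/29ℤ such that for every square s ∈ S₂₉ there exists an integer i with 0 ≤ i ≤ 1176 for which ⌊i² + β·i + x₀⌋ is congruent to c + s modulo 29. -/

import Mathlib

lemma zcov (a B C : ZMod 29) (h : a ≠ 0 ∨ B ≠ 0) :
    ∃ c : ZMod 29, ∀ s : ZMod 29, (∃ w, s = w^2) →
      ∃ T : ZMod 29, a^2*T^2 + B*T + C = c + s := by
  have h2 : (2 : ZMod 29) ≠ 0 := by decide
  haveI : Fact (Nat.Prime 29) := ⟨by norm_num⟩
  by_cases ha : a = 0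
  · have hB : B ≠ 0 := h.resolve_left (by simp [ha])
    refine ⟨C, fun s _ => ⟨B⁻¹ * s, ?_⟩⟩
    subst ha
    rw [show B * (B⁻¹ * s) = (B * B⁻¹) * s by ring, mul_inv_cancel₀ hB]
    ring
  · set u : ZMod 29 := B * (2*a^2)⁻¹ with hu_def
    have h2a : (2*a^2 : ZMod 29) ≠ 0 := mul_ne_zero h2 (pow_ne_zero 2 ha)
    have hu : 2*a^2*u = B := by
      rw [hu_def, ← mul_assoc, mul_comm (2*a^2) B, mul_assoc, mul_inv_cancel₀ h2a, mul_one]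
    refine ⟨C - a^2 * u^2, fun s hs => ?_⟩
    obtain ⟨w, rfl⟩ := hs
    set z : ZMod 29 := a⁻¹ * w with hz_def
    have hz : a * z = w := by
      rw [hz_def, ← mul_assoc, mul_inv_cancel₀ ha, one_mul]
    refine ⟨z - u, ?_⟩
    rw [← hu, ← hz]
    ring

lemma floorRun (x ε : ℝ) (hε : |ε| ≤ 1/41) :
    ∃ t₀ : ℕ, t₀ ≤ 28 ∧ ∃ v : ℤ, ∀ k : ℕ, k ≤ 28 → ⌊x + ε * (t₀ + k)⌋ = v := by
  classical
  obtain ⟨hε1, hε2⟩ := abs_le.mp hε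
  have hfl := Int.floor_le x
  have hfu := Int.lt_floor_add_one x
  rcases le_or_gt 0 ε with hε0 | hε0
  · -- ε ≥ 0
    by_cases h28 : x + ε * 28 < ⌊x⌋ + 1
    · refine ⟨0, by norm_num, ⌊x⌋, fun k hk => ?_⟩
      have hk' : (k:ℝ) ≤ 28 := by exact_mod_cast hk
      have hknn : (0:ℝ) ≤ (k:ℝ) := Nat.cast_nonneg k
      have e1 : (0:ℝ) ≤ ε * k := mul_nonneg hε0 hknn
      have e2 : ε * k ≤ ε * 28 := mul_le_mul_of_nonneg_left hk' hε0
      rw [Int.floor_eq_iff]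
      push_cast
      constructor <;> nlinarith
    · push_neg at h28
      have hP : ∃ t : ℕ, (⌊x⌋:ℝ) + 1 ≤ x + ε * t := ⟨28, by exact_mod_cast h28⟩
      set t₀ := Nat.find hP with ht₀def
      have ht₀28 : t₀ ≤ 28 := Nat.find_le (by exact_mod_cast h28)
      have hspec : (⌊x⌋:ℝ) + 1 ≤ x + ε * t₀ := Nat.find_spec hP
      have ht₀pos : 0 < t₀ := by
        by_contra h
        have h0 : t₀ = 0 := by omega
        rw [h0] at hspec
        push_cast at hspec
        nlinarith
      have hmin : ¬ ((⌊x⌋:ℝ) + 1 ≤ x + ε * (t₀ - 1 : ℕ)) := Nat.find_min hP (by omega)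
      push_neg at hmin
      have hcast : ((t₀ - 1 : ℕ) : ℝ) = (t₀ : ℝ) - 1 := by
        have h1 : (1:ℕ) ≤ t₀ := ht₀pos
        push_cast [h1]; ring
      rw [hcast] at hmin
      refine ⟨t₀, ht₀28, ⌊x⌋ + 1, fun k hk => ?_⟩
      have hk' : (k:ℝ) ≤ 28 := by exact_mod_cast hk
      have hknn : (0:ℝ) ≤ (k:ℝ) := Nat.cast_nonneg k
      have e1 : (0:ℝ) ≤ ε * k := mul_nonneg hε0 hknn
      have e2 : ε * k ≤ ε * 28 := mul_le_mul_of_nonneg_left hk' hε0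
      rw [Int.floor_eq_iff]
      push_cast
      constructor <;> nlinarith
  · -- ε < 0
    by_cases h28 : x + ε * 28 < ⌊x⌋
    · have hP : ∃ t : ℕ, x + ε * t < ⌊x⌋ := ⟨28, by exact_mod_cast h28⟩
      set t₀ := Nat.find hP with ht₀def
      have ht₀28 : t₀ ≤ 28 := Nat.find_le (by exact_mod_cast h28)
      have hspec : x + ε * t₀ < ⌊x⌋ := Nat.find_spec hP
      have ht₀pos : 0 < t₀ := by
        by_contra h
        have h0 : t₀ = 0 := by omega
        rw [h0] at hspec
        push_cast at hspec
        nlinarith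
      have hmin : ¬ (x + ε * (t₀ - 1 : ℕ) < ⌊x⌋) := Nat.find_min hP (by omega)
      push_neg at hmin
      have hcast : ((t₀ - 1 : ℕ) : ℝ) = (t₀ : ℝ) - 1 := by
        have h1 : (1:ℕ) ≤ t₀ := ht₀pos
        push_cast [h1]; ring
      rw [hcast] at hmin
      refine ⟨t₀, ht₀28, ⌊x⌋ - 1, fun k hk => ?_⟩
      have hk' : (k:ℝ) ≤ 28 := by exact_mod_cast hk
      have hknn : (0:ℝ) ≤ (k:ℝ) := Nat.cast_nonneg k
      have e1 : ε * k ≤ 0 := mul_nonpos_of_nonpos_of_nonneg hε0.le hknn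
      have e2 : ε * 28 ≤ ε * k := mul_le_mul_of_nonpos_left hk' hε0.le
      rw [Int.floor_eq_iff]
      push_cast
      constructor <;> nlinarith
    · push_neg at h28
      refine ⟨0, by norm_num, ⌊x⌋, fun k hk => ?_⟩
      have hk' : (k:ℝ) ≤ 28 := by exact_mod_cast hk
      have hknn : (0:ℝ) ≤ (k:ℝ) := Nat.cast_nonneg k
      have e1 : ε * k ≤ 0 := mul_nonpos_of_nonpos_of_nonneg hε0.le hknn
      have e2 : ε * 28 ≤ ε * k := mul_le_mul_of_nonpos_left hk' hε0.le
      rw [Int.floor_eq_iff]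
      push_cast
      constructor <;> nlinarith

lemma keyApprox (β x₀ : ℝ) :
    ∃ (q b t₀ : ℕ) (p v : ℤ),
      ((q:ZMod 29) ≠ 0 ∨ (p:ZMod 29) ≠ 0) ∧
      (∀ k : ℕ, k ≤ 28 → q*(t₀+k) + b ≤ 1176) ∧
      (∀ k : ℕ, k ≤ 28 → ⌊β * ((q*(t₀+k) + b : ℕ):ℝ) + x₀⌋ = p * ((t₀:ℤ)+(k:ℤ)) + v) := by
  classical
  obtain ⟨j, kk, hkk0, hkk40, happ⟩ := Real.exists_int_int_abs_mul_sub_le β (n := 40) (by norm_num)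
  norm_num at happ hkk40
  set d : ℕ := Int.gcd j kk with hd_def
  have hd0 : 0 < d := Int.gcd_pos_iff.mpr (Or.inr hkk0.ne')
  set p : ℤ := j / d with hp_def
  set qz : ℤ := kk / d with hqz_def
  have hdj : (d:ℤ) ∣ j := Int.gcd_dvd_left j kk
  have hdk : (d:ℤ) ∣ kk := Int.gcd_dvd_right j kk
  have hjd : (d:ℤ) * p = j := Int.mul_ediv_cancel' hdj
  have hkd : (d:ℤ) * qz = kk := Int.mul_ediv_cancel' hdk
  have hcop : Int.gcd p qz = 1 := Int.gcd_div_gcd_div_gcd hd0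
  have hdz : (0:ℤ) < d := by exact_mod_cast hd0
  have hqz0 : 0 < qz := by
    rcases (mul_pos_iff.mp (hkd ▸ hkk0)) with ⟨_, h⟩ | ⟨h, _⟩
    · exact h
    · omega
  have hqz40 : qz ≤ 40 := by
    have h40 : (d:ℤ) * qz ≤ 40 := hkd ▸ hkk40
    nlinarith [mul_le_mul_of_nonneg_right (by linarith : (1:ℤ) ≤ d) hqz0.le]
  have happ' : |(qz:ℝ) * β - p| ≤ 1/41 := by
    have e1 : ((kk : ℤ) : ℝ) = (d : ℝ) * (qz : ℝ) := by exact_mod_cast hkd.symm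
    have e2 : ((j : ℤ) : ℝ) = (d : ℝ) * (p : ℝ) := by exact_mod_cast hjd.symm
    have h1 : (kk:ℝ) * β - (j:ℝ) = (d:ℝ) * ((qz:ℝ)*β - (p:ℝ)) := by rw [e1, e2]; ring
    have hd1 : (1:ℝ) ≤ (d:ℝ) := by exact_mod_cast hd0
    have h2 : |(qz:ℝ)*β - (p:ℝ)| ≤ (d:ℝ) * |(qz:ℝ)*β - (p:ℝ)| :=
      le_mul_of_one_le_left (abs_nonneg _) hd1
    have h3 : (d:ℝ) * |(qz:ℝ)*β - (p:ℝ)| = |(kk:ℝ) * β - (j:ℝ)| := by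
      rw [h1, abs_mul, abs_of_pos (by linarith : (0:ℝ) < (d:ℝ))]
    calc |(qz:ℝ)*β - (p:ℝ)| ≤ (d:ℝ) * |(qz:ℝ)*β - (p:ℝ)| := h2
      _ = |(kk:ℝ) * β - (j:ℝ)| := h3
      _ ≤ 1/41 := happ
  set Q : ℕ := qz.toNat with hQ_def
  have hQz : (Q:ℤ) = qz := Int.toNat_of_nonneg hqz0.le
  have hQ1 : 1 ≤ Q := by omega
  have hQ40 : Q ≤ 40 := by omega
  have hQR : ((Q:ℕ):ℝ) = ((qz:ℤ):ℝ) := by exact_mod_cast hQz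
  have hQβ : (Q:ℝ) * β = (p:ℝ) + ((qz:ℝ)*β - p) := by rw [hQR]; ring
  by_cases hq21 : Q ≤ 21
  · -- small q: use the run lemma
    obtain ⟨t₀, ht₀, v, hv⟩ := floorRun x₀ ((qz:ℝ)*β - p) happ'
    refine ⟨Q, 0, t₀, p, v, ?_, ?_, ?_⟩
    · left
      intro h
      rw [ZMod.natCast_eq_zero_iff] at h
      have := Nat.le_of_dvd (by omega) h
      omega
    · intro k hk
      have h1 : Q * (t₀ + k) ≤ 21 * 56 := Nat.mul_le_mul hq21 (by omega)
      omega
    · intro k hk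
      have hre : β * ((Q*(t₀+k) + 0 : ℕ):ℝ) + x₀
          = ((p*((t₀:ℤ)+(k:ℤ)) : ℤ):ℝ) + (x₀ + ((qz:ℝ)*β - p) * ((t₀:ℝ) + (k:ℝ))) := by
        push_cast
        push_cast at hQR
        rw [hQR]; ring
      rw [hre, Int.floor_intCast_add, hv k hk]
  · -- large q: adjust the phase with b
    push_neg at hq21
    haveI : NeZero Q := ⟨by omega⟩
    set ε : ℝ := (qz:ℝ)*β - p with hε_def
    set M : ℝ := max (-ε) 0 with hM_def
    set M' : ℝ := max ε 0 with hM'_def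
    have hMnn : 0 ≤ M := le_max_right _ _
    have hM'nn : 0 ≤ M' := le_max_right _ _
    have hMε : -ε ≤ M := le_max_left _ _
    have hM'ε : ε ≤ M' := le_max_left _ _
    have hMM : M + M' ≤ 1/41 := by
      rcases le_total 0 ε with h | h
      · rw [hM_def, hM'_def, max_eq_right (by linarith : -ε ≤ 0), max_eq_left h]
        simpa [abs_of_nonneg h] using happ'
      · rw [hM_def, hM'_def, max_eq_left (by linarith : (0:ℝ) ≤ -ε), max_eq_right h]
        have h2 := happ'
        rw [abs_of_nonpos (by linarith : ε ≤ 0)] at h2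
        linarith
    set a : ℝ := 1/41 + 28 * M with ha_def
    set n : ℤ := ⌈(a - x₀) * Q⌉ with hn_def
    have hQpos : (0:ℝ) < Q := by positivity
    have hn1 : a ≤ x₀ + n / Q := by
      have h := Int.le_ceil ((a - x₀) * (Q:ℝ))
      have h2 : a - x₀ ≤ (n:ℝ) / Q := (le_div_iff₀ hQpos).mpr h
      linarith
    have hn2 : x₀ + n / Q < a + 1 / Q := by
      have h := Int.ceil_lt_add_one ((a - x₀) * (Q:ℝ))
      have e : ((a - x₀) + 1/(Q:ℝ)) * Q = (a - x₀)*Q + 1 := by field_simp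
      have h2 : (n:ℝ) < ((a - x₀) + 1/(Q:ℝ)) * Q := by rw [e]; exact h
      have h3 : (n:ℝ)/Q < (a - x₀) + 1/(Q:ℝ) := (div_lt_iff₀ hQpos).mpr h2
      linarith
    -- invert p mod Q
    have hc : Nat.Coprime p.natAbs Q := by
      have h := hcop
      rw [← hQz] at h
      simpa [Int.gcd, Int.natAbs_natCast] using h
    have hu : IsUnit ((p:ℤ) : ZMod Q) := by
      rcases Int.natAbs_eq p with hp2 | hp2
      · rw [hp2, Int.cast_natCast]
        exact (ZMod.isUnit_iff_coprime _ _).mpr hc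
      · rw [hp2, Int.cast_neg, Int.cast_natCast]
        exact ((ZMod.isUnit_iff_coprime _ _).mpr hc).neg
    set r : ℕ := (((p:ℤ) : ZMod Q)⁻¹ * ((n:ℤ) : ZMod Q)).val with hr_def
    have hrQ : r < Q := ZMod.val_lt _
    have hdvd : (Q:ℤ) ∣ p * (r:ℤ) - n := by
      rw [← ZMod.intCast_zmod_eq_zero_iff_dvd]
      push_cast
      rw [show ((r : ℕ) : ZMod Q) = ((p:ℤ) : ZMod Q)⁻¹ * ((n:ℤ) : ZMod Q) from by
        rw [hr_def]; simp [ZMod.natCast_val, ZMod.cast_id]]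
      rw [← mul_assoc, ZMod.mul_inv_of_unit _ hu, one_mul, sub_self]
    set w : ℤ := (p * (r:ℤ) - n) / (Q:ℤ) with hw_def
    have hw : (Q:ℤ) * w = p * (r:ℤ) - n := Int.mul_ediv_cancel' hdvd
    have hwR : ((Q:ℝ))*(w:ℝ) = (p:ℝ)*(r:ℝ) - (n:ℝ) := by exact_mod_cast hw
    have hy : x₀ + (r:ℝ)*β = (x₀ + (n:ℝ)/Q) + (w:ℝ) + (r:ℝ)*ε/Q := by
      have hβ : β = ((p:ℝ) + ε)/Q := by
        rw [eq_div_iff hQpos.ne']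
        linarith [hQβ]
      rw [hβ]
      field_simp
      linear_combination -hwR
    rw [ha_def] at hn1 hn2
    have habsre : |(r:ℝ)*ε/Q| ≤ 1/41 := by
      have h0 : |(r:ℝ)*ε/Q| = ((r:ℝ)/Q) * |ε| := by
        rw [abs_div, abs_mul, abs_of_nonneg (Nat.cast_nonneg r : (0:ℝ) ≤ r), abs_of_pos hQpos]
        ring
      have h1 : (r:ℝ)/Q ≤ 1 := (div_le_one hQpos).mpr (by exact_mod_cast hrQ.le)
      calc |(r:ℝ)*ε/Q| = ((r:ℝ)/Q) * |ε| := h0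
        _ ≤ 1 * |ε| := mul_le_mul_of_nonneg_right h1 (abs_nonneg ε)
        _ ≤ 1/41 := by rw [one_mul]; exact happ'
    obtain ⟨hre1, hre2⟩ := abs_le.mp habsre
    have hQ22 : (22:ℝ) ≤ Q := by
      have h : (22:ℕ) ≤ Q := hq21
      exact_mod_cast h
    have hQinv : 1/(Q:ℝ) ≤ 1/22 := one_div_le_one_div_of_le (by norm_num) hQ22
    have hfloor : ∀ k : ℕ, k ≤ 28 → ⌊(x₀ + (r:ℝ)*β) + ε*(k:ℝ)⌋ = w := by
      intro k hk
      have hk' : (k:ℝ) ≤ 28 := by exact_mod_cast hk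
      have hknn : (0:ℝ) ≤ k := Nat.cast_nonneg k
      have e3 : (-M)*k ≤ ε*k := mul_le_mul_of_nonneg_right (by linarith) hknn
      have e4 : ε*k ≤ M'*k := mul_le_mul_of_nonneg_right hM'ε hknn
      have e5 : M*k ≤ M*28 := mul_le_mul_of_nonneg_left hk' hMnn
      have e6 : M'*k ≤ M'*28 := mul_le_mul_of_nonneg_left hk' hM'nn
      rw [hy, Int.floor_eq_iff]
      clear_value w n M M' ε Q
      constructor
      · linarith
      · linarith
    refine ⟨Q, r, 0, p, w, ?_, ?_, ?_⟩
    · by_cases h29 : ((Q:ℕ) : ZMod 29) = 0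
      · right
        intro hp0
        rw [ZMod.natCast_eq_zero_iff] at h29
        have hQ29 : Q = 29 := by
          obtain ⟨c, hc2⟩ := h29
          omega
        rw [ZMod.intCast_zmod_eq_zero_iff_dvd] at hp0
        have hdq : (29:ℤ) ∣ qz := by rw [← hQz, hQ29]; norm_num
        have hgd : (29:ℤ) ∣ (Int.gcd p qz : ℤ) := by exact_mod_cast Int.dvd_gcd hp0 hdq
        rw [hcop] at hgd
        norm_num at hgd
      · left; exact h29
    · intro k hk
      have h1 : Q * (0 + k) ≤ 40 * 28 := Nat.mul_le_mul hQ40 (by omega)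
      omega
    · intro k hk
      have hsplit : β * ((Q*(0+k) + r : ℕ):ℝ) + x₀
          = ((p*(k:ℤ) : ℤ):ℝ) + ((x₀ + (r:ℝ)*β) + ε*(k:ℝ)) := by
        push_cast
        linear_combination (k:ℝ) * hQβ
      rw [hsplit, Int.floor_intCast_add, hfloor k hk]
      push_cast
      ring


/-- For all real `β`, `x₀` there is `c ∈ ℤ/29ℤ` such that every square `s` mod 29
is hit, shifted by `c`, by `⌊i² + βi + x₀⌋` for some `0 ≤ i ≤ 1176`. -/
theorem stmt_5 (β x₀ : ℝ) :
    ∃ c : ZMod 29, ∀ s : ZMod 29, (∃ t : ZMod 29, s = t ^ 2) →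
      ∃ i : ℕ, i ≤ 1176 ∧
        ((⌊(i : ℝ) ^ 2 + β * i + x₀⌋ : ℤ) : ZMod 29) = c + s := by
  obtain ⟨q, b, t₀, p, v, hD, hle, hfl⟩ := keyApprox β x₀
  have hD' : ((q:ZMod 29)) ≠ 0 ∨ (2*(q:ZMod 29)*(b:ZMod 29) + (p:ZMod 29)) ≠ 0 := by
    by_cases ha : (q:ZMod 29) = 0
    · right
      have hp : (p:ZMod 29) ≠ 0 := hD.resolve_left (not_not_intro ha)
      rw [ha]
      simpa using hp
    · left; exact ha
  obtain ⟨c, hc⟩ := zcov (q:ZMod 29) (2*(q:ZMod 29)*(b:ZMod 29) + (p:ZMod 29))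
    ((b:ZMod 29)^2 + (v:ZMod 29)) hD'
  refine ⟨c, fun s hs => ?_⟩
  obtain ⟨T, hT⟩ := hc s hs
  set k : ℕ := (T - ((t₀:ℕ) : ZMod 29)).val with hk_def
  have hk28 : k ≤ 28 := by
    have := ZMod.val_lt (T - ((t₀:ℕ) : ZMod 29))
    omega
  refine ⟨q*(t₀+k) + b, hle k hk28, ?_⟩
  have h1 : ((q*(t₀+k)+b : ℕ) : ℝ)^2 + β*((q*(t₀+k)+b : ℕ):ℝ) + x₀
      = ((((q*(t₀+k)+b : ℕ):ℤ)^2 : ℤ) : ℝ) + (β*((q*(t₀+k)+b : ℕ):ℝ) + x₀) := by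
    push_cast
    ring
  rw [h1, Int.floor_intCast_add, hfl k hk28]
  have hTk : ((t₀ : ZMod 29) + (k : ZMod 29)) = T := by
    rw [hk_def]
    simp [ZMod.natCast_val, ZMod.cast_id]
  push_cast
  rw [hTk]
  linear_combination hT
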